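/- Let C ⊆ L⁰₊ be convex with 1 ∈ C strictly positive on C, and suppose cs_1(C) is bounded in probability. Then 1 is maximal in cs_1(C): if f ∈ cs_1(C) satisfies f ≥ 1 a.s., then f = 1 a.s. -/

import Mathlib

open MeasureTheory Filter Set

noncomputable section

variable {Ω : Type*} [MeasurableSpace Ω]

/-- The nonnegative orthant `L⁰₊` of `L⁰`: (a.e. classes of) random variables that are
a.e. nonnegative.  We work with representatives, requiring a.e.-measurability. -/
def L0plus (P : Measure Ω) : Set (Ω → ℝ) :=
  {f | AEMeasurable f P ∧ 0 ≤ᵐ[P] f}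

/-- A set `A ⊆ L⁰₊` is bounded (in probability) if `lim_{ℓ→∞} sup_{f∈A} P[f>ℓ] = 0`. -/
def BoundedInProb (P : Measure Ω) (A : Set (Ω → ℝ)) : Prop :=
  Tendsto (fun ℓ : ℝ => ⨆ f ∈ A, P {ω | ℓ < f ω}) atTop (nhds 0)

/-- A set `K` is closed in probability: it contains every (a.e.-measurable) limit in
measure of sequences from `K`.  (Convergence in probability is metrizable, so sequential
closedness is closedness.) -/
def ClosedInProb (P : Measure Ω) (K : Set (Ω → ℝ)) : Prop :=
  ∀ (f : ℕ → Ω → ℝ) (g : Ω → ℝ), (∀ n, f n ∈ K) → AEMeasurable g P →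
    TendstoInMeasure P f atTop g → g ∈ K

/-- `g` is strictly positive on `C`: `P[f > 0, g = 0] = 0` for every `f ∈ C`. -/
def StrictlyPositiveOn (P : Measure Ω) (C : Set (Ω → ℝ)) (g : Ω → ℝ) : Prop :=
  ∀ f ∈ C, P ({ω | 0 < f ω} ∩ {ω | g ω = 0}) = 0

/-- `Q` is a probability measure equivalent to `P`. -/
def EquivProb (P Q : Measure Ω) : Prop :=
  IsProbabilityMeasure Q ∧ Q ≪ P ∧ P ≪ Q

/-- `g` is a numéraire of `C`: it is strictly positive on `C` and there is an equivalent
probability `Q` with `E_Q[(f/g)·1_{g>0}] ≤ Q[g>0]` for all `f ∈ C`. -/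
def IsNumeraire (P : Measure Ω) (C : Set (Ω → ℝ)) (g : Ω → ℝ) : Prop :=
  StrictlyPositiveOn P C g ∧
    ∃ Q : Measure Ω, EquivProb P Q ∧
      ∀ f ∈ C, (∫⁻ ω in {ω | 0 < g ω}, ENNReal.ofReal (f ω / g ω) ∂Q) ≤ Q {ω | 0 < g ω}

/-- The class `CS_g(C)` of subsets `K` of `L⁰₊` with (CS1) `C ⊆ K`, (CS2) `K` convex and
closed in probability, (CS3) `f ∈ K`, `δ ≥ 0`, `(1+δ)f − δg ∈ L⁰₊` imply `(1+δ)f − δg ∈ K`. -/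
def CSclass (P : Measure Ω) (C : Set (Ω → ℝ)) (g : Ω → ℝ) : Set (Set (Ω → ℝ)) :=
  {K | K ⊆ L0plus P ∧ C ⊆ K ∧ Convex ℝ K ∧ ClosedInProb P K ∧
    ∀ f ∈ K, ∀ δ : ℝ, 0 ≤ δ →
      (fun ω => (1 + δ) * f ω - δ * g ω) ∈ L0plus P →
      (fun ω => (1 + δ) * f ω - δ * g ω) ∈ K}

/-- `cs_g(C)`, the smallest element of `CS_g(C)`. -/
def csSet (P : Measure Ω) (C : Set (Ω → ℝ)) (g : Ω → ℝ) : Set (Ω → ℝ) :=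
  ⋂ K ∈ CSclass P C g, K

/-- The solid hull of `K` in `L⁰₊`. -/
def SolidHull (P : Measure Ω) (K : Set (Ω → ℝ)) : Set (Ω → ℝ) :=
  {f | f ∈ L0plus P ∧ ∃ h ∈ K, f ≤ᵐ[P] h}

/-- `L∞`: essentially bounded (a.e.-measurable) random variables. -/
def Linf (P : Measure Ω) : Set (Ω → ℝ) :=
  {f | AEMeasurable f P ∧ ∃ c : ℝ, ∀ᵐ ω ∂P, |f ω| ≤ c}

/-- `L∞₊ = L⁰₊ ∩ L∞`. -/
def LinfPlus (P : Measure Ω) : Set (Ω → ℝ) := L0plus P ∩ Linf P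

/-- `L` is solid: `0 ≤ u ≤ h` a.s. with `h ∈ L` implies `u ∈ L`. -/
def IsSolid (P : Measure Ω) (L : Set (Ω → ℝ)) : Prop :=
  ∀ u : Ω → ℝ, AEMeasurable u P → 0 ≤ᵐ[P] u → (∃ h ∈ L, u ≤ᵐ[P] h) → u ∈ L

/-- `A_α := α (L − 1) = { α(f − 1) : f ∈ L }`. -/
def Aset (L : Set (Ω → ℝ)) (α : ℝ) : Set (Ω → ℝ) :=
  (fun f : Ω → ℝ => fun ω => α * (f ω - 1)) '' L

/-- `J := ⋃_{α ≥ 0} A_α`. -/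
def Jset (L : Set (Ω → ℝ)) : Set (Ω → ℝ) := ⋃ α ∈ Ici (0 : ℝ), Aset L α

/-- The weak* topology on (representatives of) `L∞`, viewed as the dual of `L¹(P)`:
the topology induced by the maps `φ ↦ ∫ φ·u dP` for integrable `u`. -/
def weakStarTop (P : Measure Ω) : TopologicalSpace (Ω → ℝ) :=
  ⨅ (u : Ω → ℝ) (_ : Integrable u P),
    TopologicalSpace.induced (fun φ : Ω → ℝ => ∫ ω, φ ω * u ω ∂P) inferInstance

/-- The witness set `K := { h ∈ L⁰₊ : P[h>0, g=0]=0 and E_Q[(h/g)·1_{g>0}] ≤ Q[g>0] }`. -/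
def Kwitness (P Q : Measure Ω) (g : Ω → ℝ) : Set (Ω → ℝ) :=
  {h | h ∈ L0plus P ∧ P ({ω | 0 < h ω} ∩ {ω | g ω = 0}) = 0 ∧
    (∫⁻ ω in {ω | 0 < g ω}, ENNReal.ofReal (h ω / g ω) ∂Q) ≤ Q {ω | 0 < g ω}}

/-- The set `C` of the example: outcomes `1 − θ₁ + (θ₁ + θ₂)ξ` for `θ` in the constraint
set `Θ = { θ ∈ ℝ₊² : θ₂ ≤ √θ₁ ≤ 1 }`. -/
def exampleC (ξ : Ω → ℝ) : Set (Ω → ℝ) :=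
  {f | ∃ θ : ℝ × ℝ, (0 ≤ θ.1 ∧ 0 ≤ θ.2 ∧ θ.2 ≤ Real.sqrt θ.1 ∧ Real.sqrt θ.1 ≤ 1) ∧
    f = fun ω => 1 - θ.1 + (θ.1 + θ.2) * ξ ω}

/-- if `1 ∈ C` and `cs_1(C)` is bounded in probability, then `1` is maximal
in `cs_1(C)`. -/
theorem one_maximal_in_csSet
    (P : Measure Ω) [IsProbabilityMeasure P]
    (C : Set (Ω → ℝ)) (hC : C ⊆ L0plus P) (hconv : Convex ℝ C)
    (h1 : (fun _ => (1 : ℝ)) ∈ C)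
    (hb : BoundedInProb P (csSet P C (fun _ => (1 : ℝ)))) :
    ∀ f ∈ csSet P C (fun _ => (1 : ℝ)),
      (fun _ => (1 : ℝ)) ≤ᵐ[P] f → f =ᵐ[P] (fun _ => (1 : ℝ)) := by
  intro f hf hge
  by_contra hne
  set s : ℝ → ENNReal :=
    fun ℓ => ⨆ h ∈ csSet P C (fun _ => (1 : ℝ)), P {ω | ℓ < h ω} with hs
  by_cases hcs : (CSclass P C (fun _ => (1 : ℝ))).Nonempty
  · obtain ⟨K₀, hK₀⟩ := hcs
    have hfK₀ : f ∈ K₀ := by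
      have := hf
      simp only [csSet, mem_iInter] at this
      exact this K₀ hK₀
    have hmeas : AEMeasurable f P := (hK₀.1 hfK₀).1
    -- P {f < 1} = 0
    have hlt : P {ω | f ω < 1} = 0 := by
      have := hge
      rw [Filter.EventuallyLE, ae_iff] at this
      simpa [not_le] using this
    -- P {f ≠ 1} ≠ 0
    have hne' : P {ω | f ω ≠ 1} ≠ 0 := by
      intro h0
      apply hne
      rw [Filter.EventuallyEq, ae_iff]
      simpa using h0
    -- P {f > 1} ≠ 0
    have hgt : P {ω | 1 < f ω} ≠ 0 := by
      intro h0
      apply hne'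
      have hsub : {ω | f ω ≠ 1} ⊆ {ω | f ω < 1} ∪ {ω | 1 < f ω} := by
        intro ω hω
        rcases lt_trichotomy (f ω) 1 with h | h | h
        · exact Or.inl h
        · exact absurd h hω
        · exact Or.inr h
      have := (measure_mono hsub).trans (measure_union_le (μ := P) _ _)
      rw [hlt, h0] at this
      simpa using this
    -- find c > 0 with P {f > 1 + c} ≠ 0
    have hex : ∃ n : ℕ, P {ω | 1 + 1 / ((n : ℝ) + 1) < f ω} ≠ 0 := by
      by_contra hall
      push_neg at hall
      apply hgt
      have hsub : {ω | 1 < f ω} ⊆ ⋃ n : ℕ, {ω | 1 + 1 / ((n : ℝ) + 1) < f ω} := by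
        intro ω hω
        obtain ⟨n, hn⟩ := exists_nat_one_div_lt (sub_pos.mpr (show (1:ℝ) < f ω from hω))
        exact mem_iUnion.mpr ⟨n, by simp only [mem_setOf_eq]; linarith⟩
      have := (measure_mono hsub).trans_eq (measure_iUnion_null hall)
      simpa using this
    obtain ⟨n, hεne⟩ := hex
    set c : ℝ := 1 / ((n : ℝ) + 1) with hc
    have hcpos : 0 < c := by positivity
    set ε : ENNReal := P {ω | 1 + c < f ω} with hε
    have hεpos : 0 < ε := pos_iff_ne_zero.mpr hεne
    have hev : ∀ᶠ ℓ in atTop, s ℓ < ε := hb.eventually_lt_const hεpos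
    obtain ⟨ℓ, hℓ⟩ := hev.exists
    set δ : ℝ := max 0 (ℓ / c) with hδ
    have hδ0 : (0 : ℝ) ≤ δ := le_max_left _ _
    have hδc : ℓ ≤ δ * c := by
      calc ℓ = (ℓ / c) * c := by field_simp
      _ ≤ δ * c := by
        apply mul_le_mul_of_nonneg_right (le_max_right _ _) hcpos.le
    -- the shifted element
    have hL0 : (fun ω => (1 + δ) * f ω - δ * (fun _ => (1 : ℝ)) ω) ∈ L0plus P := by
      constructor
      · exact (hmeas.const_mul (1 + δ)).sub aemeasurable_const
      · filter_upwards [hge] with ω hω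
        simp only [Pi.zero_apply]
        nlinarith
    have hgmem : (fun ω => (1 + δ) * f ω - δ * (fun _ => (1 : ℝ)) ω) ∈
        csSet P C (fun _ => (1 : ℝ)) := by
      simp only [csSet, mem_iInter]
      intro K hK
      have hfK : f ∈ K := by
        have := hf
        simp only [csSet, mem_iInter] at this
        exact this K hK
      exact hK.2.2.2.2 f hfK δ hδ0 hL0
    have hbig : ε ≤ P {ω | ℓ < (1 + δ) * f ω - δ * (fun _ => (1 : ℝ)) ω} := by
      apply measure_mono
      intro ω hω
      simp only [mem_setOf_eq] at hω ⊢
      nlinarith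
    have hle : P {ω | ℓ < (1 + δ) * f ω - δ * (fun _ => (1 : ℝ)) ω} ≤ s ℓ :=
      le_biSup (fun h => P {ω | ℓ < h ω}) hgmem
    exact absurd hℓ (not_lt.mpr (hbig.trans hle))
  · -- CSclass is empty: csSet is everything, contradicting boundedness
    have huniv : csSet P C (fun _ => (1 : ℝ)) = univ := by
      simp [csSet, not_nonempty_iff_eq_empty.mp hcs]
    have hev : ∀ᶠ ℓ in atTop, s ℓ < 1 := hb.eventually_lt_const one_pos
    obtain ⟨ℓ, hℓ⟩ := hev.exists
    have hmem : (fun _ : Ω => ℓ + 1) ∈ csSet P C (fun _ => (1 : ℝ)) := by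
      rw [huniv]; trivial
    have h1le : (1 : ENNReal) ≤ s ℓ := by
      have : P {ω | ℓ < (fun _ : Ω => ℓ + 1) ω} = 1 := by
        simp [show ℓ < ℓ + 1 by linarith]
      calc (1 : ENNReal) = P {ω | ℓ < (fun _ : Ω => ℓ + 1) ω} := this.symm
      _ ≤ s ℓ := le_biSup (fun h => P {ω | ℓ < h ω}) hmem
    exact absurd hℓ (not_lt.mpr h1le)

end
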